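/- Let R = F_2[x,y] with maximal ideal m = (x,y), p = 2, and s = 4/3. For e > 0, the length of R/(m^{⌈s·2^e⌉} + m^{[2^e]}) equals (7/9)·4^e + (5/9)·2^e − 2/9 if e is odd, and (7/9)·4^e + (7/9)·2^e − 5/9 if e is even. -/

import Mathlib

open MvPolynomial Finset

noncomputable section Stmt17Aux

local notation "K" => ZMod 2
local notation "R" => MvPolynomial (Fin 2) (ZMod 2)

-- degree-lower-bound ideal
def Jtot (k : ℕ) : Ideal R where
  carrier := {f | ∀ d : Fin 2 →₀ ℕ, coeff d f ≠ 0 → k ≤ d 0 + d 1}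
  zero_mem' := by intro d hd; simp at hd
  add_mem' := by
    intro a b ha hb d hd
    by_cases h : coeff d a ≠ 0
    · exact ha d h
    · push_neg at h
      apply hb d
      simpa [coeff_add, h] using hd
  smul_mem' := by
    intro c f hf d hd
    rw [smul_eq_mul, coeff_mul] at hd
    obtain ⟨p, hp, hne⟩ := Finset.exists_ne_zero_of_sum_ne_zero hd
    rw [Finset.HasAntidiagonal.mem_antidiagonal] at hp
    have h2 : coeff p.2 f ≠ 0 := by intro h; simp [h] at hne
    calc k ≤ p.2 0 + p.2 1 := hf p.2 h2
    _ ≤ d 0 + d 1 := by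
        have : p.2 0 ≤ d 0 := by rw [← hp]; simp
        have : p.2 1 ≤ d 1 := by rw [← hp]; simp
        omega

def Jfrob (q : ℕ) : Ideal R where
  carrier := {f | ∀ d : Fin 2 →₀ ℕ, coeff d f ≠ 0 → q ≤ d 0 ∨ q ≤ d 1}
  zero_mem' := by intro d hd; simp at hd
  add_mem' := by
    intro a b ha hb d hd
    by_cases h : coeff d a ≠ 0
    · exact ha d h
    · push_neg at h
      apply hb d
      simpa [coeff_add, h] using hd
  smul_mem' := by
    intro c f hf d hd
    rw [smul_eq_mul, coeff_mul] at hd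
    obtain ⟨p, hp, hne⟩ := Finset.exists_ne_zero_of_sum_ne_zero hd
    rw [Finset.HasAntidiagonal.mem_antidiagonal] at hp
    have h2 : coeff p.2 f ≠ 0 := by intro h; simp [h] at hne
    have h0 : p.2 0 ≤ d 0 := by rw [← hp]; simp
    have h1 : p.2 1 ≤ d 1 := by rw [← hp]; simp
    rcases hf p.2 h2 with h | h
    · exact Or.inl (le_trans h h0)
    · exact Or.inr (le_trans h h1)

lemma Jtot_mul (k l : ℕ) : Jtot k * Jtot l ≤ Jtot (k + l) := by
  rw [Ideal.mul_le]
  intro a ha b hb d hd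
  rw [coeff_mul] at hd
  obtain ⟨p, hp, hne⟩ := Finset.exists_ne_zero_of_sum_ne_zero hd
  rw [Finset.HasAntidiagonal.mem_antidiagonal] at hp
  have h1 : coeff p.1 a ≠ 0 := by intro h; simp [h] at hne
  have h2 : coeff p.2 b ≠ 0 := by intro h; simp [h] at hne
  have := ha p.1 h1
  have := hb p.2 h2
  have e0 : p.1 0 + p.2 0 = d 0 := by rw [← hp]; simp
  have e1 : p.1 1 + p.2 1 = d 1 := by rw [← hp]; simp
  omega

lemma span_X_le_Jtot : Ideal.span (Set.range (X : Fin 2 → R)) ≤ Jtot 1 := by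
  rw [Ideal.span_le]
  rintro _ ⟨i, rfl⟩ d hd
  rw [coeff_X'] at hd
  split_ifs at hd with h
  · subst h
    fin_cases i <;> simp
  · simp at hd

lemma pow_span_X_le_Jtot (k : ℕ) :
    Ideal.span (Set.range (X : Fin 2 → R)) ^ k ≤ Jtot k := by
  induction k with
  | zero => intro f _ d hd; omega
  | succ n ih =>
      calc Ideal.span (Set.range (X : Fin 2 → R)) ^ (n + 1)
          = Ideal.span (Set.range (X : Fin 2 → R)) ^ n *
            Ideal.span (Set.range (X : Fin 2 → R)) := pow_succ _ _
        _ ≤ Jtot n * Jtot 1 := Ideal.mul_mono ih span_X_le_Jtot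
        _ ≤ Jtot (n + 1) := Jtot_mul n 1

lemma span_Xpow_le_Jfrob (q : ℕ) :
    Ideal.span (Set.range fun i : Fin 2 => (X i : R) ^ q) ≤ Jfrob q := by
  rw [Ideal.span_le]
  rintro _ ⟨i, rfl⟩ d hd
  dsimp only at hd
  rw [X_pow_eq_monomial, coeff_monomial] at hd
  split_ifs at hd with h
  · subst h
    fin_cases i
    · left; simp
    · right; simp
  · simp at hd



def cbox (q N : ℕ) : Finset (ℕ × ℕ) :=
  (range q ×ˢ range q).filter fun p => p.1 + p.2 < N

def Sfin (q N : ℕ) : Finset (Fin 2 →₀ ℕ) :=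
  (cbox q N).image fun p => Finsupp.single 0 p.1 + Finsupp.single 1 p.2

lemma mem_Sfin {q N : ℕ} {d : Fin 2 →₀ ℕ} :
    d ∈ Sfin q N ↔ d 0 < q ∧ d 1 < q ∧ d 0 + d 1 < N := by
  constructor
  · intro h
    simp only [Sfin, mem_image] at h
    obtain ⟨p, hp, rfl⟩ := h
    simp only [cbox, mem_filter, mem_product, mem_range] at hp
    simp only [Finsupp.add_apply, Finsupp.single_apply]
    norm_num
    exact ⟨hp.1.1, hp.1.2, hp.2⟩
  · rintro ⟨h0, h1, h2⟩
    simp only [Sfin, mem_image]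
    refine ⟨(d 0, d 1), ?_, ?_⟩
    · simp only [cbox, mem_filter, mem_product, mem_range]
      exact ⟨⟨h0, h1⟩, h2⟩
    · ext i
      fin_cases i <;> simp [Finsupp.single_apply]

lemma Sfin_card (q N : ℕ) : (Sfin q N).card = (cbox q N).card := by
  apply Finset.card_image_of_injOn
  intro a _ b _ h
  have h0 := DFunLike.congr_fun h (0 : Fin 2)
  have h1 := DFunLike.congr_fun h (1 : Fin 2)
  simp [Finsupp.single_apply] at h0 h1
  exact Prod.ext h0 h1

lemma mono_eq (d : Fin 2 →₀ ℕ) :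
    (monomial d 1 : R) = X 0 ^ d 0 * X 1 ^ d 1 := by
  have h : Finsupp.single (0 : Fin 2) (d 0) + Finsupp.single 1 (d 1) = d := by
    ext i
    fin_cases i <;> simp [Finsupp.single_apply]
  rw [X_pow_eq_monomial, X_pow_eq_monomial, monomial_mul, one_mul, h]

set_option maxHeartbeats 1000000 in
lemma finrank_quot (q N : ℕ) :
    Module.finrank (ZMod 2)
      (R ⧸ (Ideal.span (Set.range (X : Fin 2 → R)) ^ N ⊔
        Ideal.span (Set.range fun i : Fin 2 => (X i : R) ^ q))) = (cbox q N).card := by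
  classical
  set I : Ideal R := Ideal.span (Set.range (X : Fin 2 → R)) ^ N ⊔
      Ideal.span (Set.range fun i : Fin 2 => (X i : R) ^ q) with hI
  set S : Set (Fin 2 →₀ ℕ) := ↑(Sfin q N) with hSdef
  have hmemS : ∀ d : Fin 2 →₀ ℕ, d ∈ S ↔ d 0 < q ∧ d 1 < q ∧ d 0 + d 1 < N := by
    intro d; rw [hSdef, Finset.mem_coe, mem_Sfin]
  set V : Submodule (ZMod 2) R :=
    Submodule.span (ZMod 2) ((fun d => (monomial d 1 : R)) '' S) with hV
  set W : Submodule (ZMod 2) R :=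
    Submodule.span (ZMod 2) ((fun d => (monomial d 1 : R)) '' Sᶜ) with hW
  have hb : LinearIndependent (ZMod 2) (fun d : Fin 2 →₀ ℕ => (monomial d 1 : R)) := by
    have := (basisMonomials (Fin 2) (ZMod 2)).linearIndependent
    rwa [coe_basisMonomials] at this
  have hWI : W ≤ I.restrictScalars (ZMod 2) := by
    rw [hW, Submodule.span_le]
    rintro _ ⟨d, hd, rfl⟩
    rw [Set.mem_compl_iff, hmemS] at hd
    have hcases : q ≤ d 0 ∨ q ≤ d 1 ∨ N ≤ d 0 + d 1 := by
      by_contra hc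
      push_neg at hc
      exact hd ⟨hc.1, hc.2.1, hc.2.2⟩
    show (monomial d 1 : R) ∈ I
    rw [hI]
    rcases hcases with h | h | h
    · apply Ideal.mem_sup_right
      have hq : q + (d 0 - q) = d 0 := by omega
      have he : (monomial d 1 : R) = X 0 ^ q * (X 0 ^ (d 0 - q) * X 1 ^ d 1) := by
        rw [mono_eq, ← mul_assoc, ← pow_add, hq]
      rw [he]
      exact Ideal.mul_mem_right _ _ (Ideal.subset_span ⟨0, rfl⟩)
    · apply Ideal.mem_sup_right
      have hq : q + (d 1 - q) = d 1 := by omega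
      have he : (monomial d 1 : R) = X 1 ^ q * (X 0 ^ d 0 * X 1 ^ (d 1 - q)) := by
        rw [mono_eq, show (X 1 : R) ^ d 1 = X 1 ^ q * X 1 ^ (d 1 - q) by rw [← pow_add, hq]]
        ring
      rw [he]
      exact Ideal.mul_mem_right _ _ (Ideal.subset_span ⟨1, rfl⟩)
    · apply Ideal.mem_sup_left
      have h1 : (monomial d 1 : R) ∈ Ideal.span (Set.range (X : Fin 2 → R)) ^ (d 0 + d 1) := by
        rw [mono_eq, pow_add]
        have m0 : (X 0 : R) ∈ Ideal.span (Set.range (X : Fin 2 → R)) :=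
          Ideal.subset_span (Set.mem_range_self 0)
        have m1 : (X 1 : R) ∈ Ideal.span (Set.range (X : Fin 2 → R)) :=
          Ideal.subset_span (Set.mem_range_self 1)
        exact Submodule.mul_mem_mul (Ideal.pow_mem_pow m0 _) (Ideal.pow_mem_pow m1 _)
      exact Ideal.pow_le_pow_right h h1
  have hIW : I.restrictScalars (ZMod 2) ≤ W := by
    intro f hf
    have hsupp : ∀ d : Fin 2 →₀ ℕ, coeff d f ≠ 0 → d ∈ Sᶜ := by
      intro d hd
      rw [Set.mem_compl_iff, hmemS]
      rintro ⟨hd0, hd1, hdN⟩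
      rw [Submodule.restrictScalars_mem, hI] at hf
      obtain ⟨a, ha, b, hb2, rfl⟩ := Submodule.mem_sup.mp hf
      have h1 : a ∈ Jtot N := pow_span_X_le_Jtot N ha
      have h2 : b ∈ Jfrob q := span_Xpow_le_Jfrob q hb2
      have ca : coeff d a = 0 := by
        by_contra h; have := h1 d h; omega
      have cb : coeff d b = 0 := by
        by_contra h; rcases h2 d h with h' | h' <;> omega
      rw [coeff_add, ca, cb, add_zero] at hd
      exact hd rfl
    show f ∈ W
    rw [f.as_sum]
    apply Submodule.sum_mem
    intro d hd
    have he : (monomial d (coeff d f) : R) = coeff d f • monomial d 1 := by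
      rw [smul_monomial, smul_eq_mul, mul_one]
    rw [he]
    exact Submodule.smul_mem _ _
      (Submodule.subset_span ⟨d, hsupp d (mem_support_iff.mp hd), rfl⟩)
  have hcompl : IsCompl W V := by
    constructor
    · exact hb.disjoint_span_image disjoint_compl_left
    · rw [codisjoint_iff, hW, hV, ← Submodule.span_union, ← Set.image_union,
        Set.compl_union_self, Set.image_univ]
      have := (basisMonomials (Fin 2) (ZMod 2)).span_eq
      rwa [coe_basisMonomials] at this
  have hWeq : I.restrictScalars (ZMod 2) = W := le_antisymm hIW hWI
  have e1 : (R ⧸ I) ≃ₗ[ZMod 2] (R ⧸ I.restrictScalars (ZMod 2)) :=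
    (Submodule.Quotient.restrictScalarsEquiv (ZMod 2) I).symm
  rw [e1.finrank_eq, (Submodule.quotEquivOfEq _ _ hWeq).finrank_eq,
    (Submodule.quotientEquivOfIsCompl W V hcompl).finrank_eq]
  have hrestr : LinearIndependent (ZMod 2)
      (fun x : S => ((monomial (x : Fin 2 →₀ ℕ)) 1 : R)) :=
    hb.comp ((↑) : S → (Fin 2 →₀ ℕ)) Subtype.coe_injective
  have hli : LinearIndependent (ZMod 2)
      ((↑) : ((fun d => (monomial d 1 : R)) '' S) → R) :=
    LinearIndepOn.id_image (v := fun d => ((monomial d) 1 : R)) (s := S) hrestr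
  haveI : Fintype ((fun d => (monomial d 1 : R)) '' S) := by
    rw [hSdef]
    exact Set.fintypeImage _ _
  rw [hV, finrank_span_set_eq_card hli]
  have : ((fun d => (monomial d 1 : R)) '' S).toFinset
      = (Sfin q N).image (fun d => (monomial d 1 : R)) := by
    ext x
    simp [hSdef]
  rw [this, Finset.card_image_of_injective _ (monomial_left_injective one_ne_zero),
    Sfin_card]

lemma cbox_card (q N : ℕ) (h1 : q ≤ N) (h2 : N + 2 ≤ 2 * q) :
    (cbox q N).card + (2 * q - N) * (2 * q - N - 1) / 2 = q * q := by
  classical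
  have hsplit :
      (cbox q N).card + ((range q ×ˢ range q).filter fun p => ¬ p.1 + p.2 < N).card
        = q * q := by
    unfold cbox
    rw [Finset.card_filter_add_card_filter_not]
    simp [Finset.card_product]
  set m := 2 * q - 2 - N with hm
  have hbad : ((range q ×ˢ range q).filter fun p => ¬ p.1 + p.2 < N).card
      = ((range (m + 1)).biUnion fun k => Finset.HasAntidiagonal.antidiagonal k).card := by
    apply Finset.card_nbij' (fun p => (q - 1 - p.1, q - 1 - p.2))
      (fun p => (q - 1 - p.1, q - 1 - p.2))
    · intro p hp
      rw [Finset.mem_coe] at hp ⊢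
      simp only [mem_filter, mem_product, mem_range, not_lt] at hp
      rw [Finset.mem_biUnion]
      refine ⟨(q - 1 - p.1) + (q - 1 - p.2), ?_, ?_⟩
      · rw [mem_range]; omega
      · rw [Finset.HasAntidiagonal.mem_antidiagonal]
    · intro p hp
      rw [Finset.mem_coe] at hp ⊢
      rw [Finset.mem_biUnion] at hp
      obtain ⟨k, hk, hp⟩ := hp
      rw [mem_range] at hk
      rw [Finset.HasAntidiagonal.mem_antidiagonal] at hp
      simp only [mem_filter, mem_product, mem_range, not_lt]
      omega
    · intro p hp
      rw [Finset.mem_coe] at hp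
      simp only [mem_filter, mem_product, mem_range, not_lt] at hp
      ext <;> simp <;> omega
    · intro p hp
      rw [Finset.mem_coe] at hp
      rw [Finset.mem_biUnion] at hp
      obtain ⟨k, hk, hp⟩ := hp
      rw [mem_range] at hk
      rw [Finset.HasAntidiagonal.mem_antidiagonal] at hp
      ext <;> simp <;> omega
  have hA : ((range (m + 1)).biUnion fun k => Finset.HasAntidiagonal.antidiagonal k).card
      = (2 * q - N) * (2 * q - N - 1) / 2 := by
    rw [Finset.card_biUnion]
    · have : ∑ k ∈ range (m + 1), (Finset.HasAntidiagonal.antidiagonal k).card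
          = ∑ k ∈ range (m + 1), (k + 1) := by
        apply Finset.sum_congr rfl
        intro k _
        exact Finset.Nat.card_antidiagonal k
      rw [this]
      have e1 : 2 * q - N = m + 2 := by omega
      rw [e1]
      have e2 : m + 2 - 1 = m + 1 := rfl
      rw [e2]
      have h3 : ∑ k ∈ range (m + 2), k = ∑ k ∈ range (m + 1), (k + 1) := by
        rw [Finset.sum_range_succ']
        simp
      have h4 : (∑ k ∈ range (m + 2), k) * 2 = (m + 2) * (m + 1) := by
        rw [Finset.sum_range_id_mul_two]
        simp
      omega
    · intro a _ b _ hab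
      apply Finset.disjoint_left.mpr
      intro p hpa hpb
      rw [Finset.HasAntidiagonal.mem_antidiagonal] at hpa hpb
      exact hab (hpa ▸ hpb)
  omega

lemma four_pow_mod (t : ℕ) : ∃ m : ℕ, 4 ^ t = 3 * m + 1 := by
  induction t with
  | zero => exact ⟨0, rfl⟩
  | succ n ih => obtain ⟨m, hm⟩ := ih; exact ⟨4 * m + 1, by rw [pow_succ, hm]; ring⟩

lemma ceil_val (e M : ℕ) (hM : 0 < M) (h3 : 3 * M = 4 * 2 ^ e + 1 ∨ 3 * M = 4 * 2 ^ e + 2) :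
    ⌈(4 : ℚ) / 3 * 2 ^ e⌉₊ = M := by
  rw [Nat.ceil_eq_iff (by omega)]
  have hcast : ((3 * M : ℕ) : ℚ) = 4 * 2 ^ e + 1 ∨ ((3 * M : ℕ) : ℚ) = 4 * 2 ^ e + 2 := by
    rcases h3 with h | h <;> [left; right] <;> exact_mod_cast congrArg (Nat.cast : ℕ → ℚ) h
  push_cast at hcast
  have h2 : (0:ℚ) < 2 ^ e := by positivity
  constructor
  · rw [Nat.cast_sub (by omega)]
    push_cast
    rcases hcast with h | h <;> nlinarith
  · rcases hcast with h | h <;> nlinarith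

lemma odd_pow_val (e : ℕ) (he : Odd e) : ∃ k : ℕ, 2 ^ e = 6 * k + 2 := by
  obtain ⟨t, rfl⟩ := he
  obtain ⟨m, hm⟩ := four_pow_mod t
  refine ⟨m, ?_⟩
  have h : 2 ^ (2 * t + 1) = 4 ^ t * 2 := by
    rw [pow_succ, pow_mul]; norm_num
  rw [h, hm]; ring

lemma even_pow_val (e : ℕ) (he : Even e) (he0 : 0 < e) : ∃ k : ℕ, 0 < k ∧ 2 ^ e = 3 * k + 1 := by
  obtain ⟨t, rfl⟩ := he
  have ht : 0 < t := by omega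
  obtain ⟨m, hm⟩ := four_pow_mod t
  have h4 : 4 ≤ 4 ^ t := by
    calc 4 = 4 ^ 1 := (pow_one 4).symm
    _ ≤ 4 ^ t := Nat.pow_le_pow_right (by norm_num) ht
  refine ⟨m, by omega, ?_⟩
  have h : 2 ^ (t + t) = 4 ^ t := by
    rw [← two_mul, pow_mul]; norm_num
  rw [h, hm]

end Stmt17Aux

/-- For `R = 𝔽₂[x,y]`, `𝔪 = (x,y)`, `s = 4/3`, and `e > 0`, the length of
`R/(𝔪^{⌈s·2ᵉ⌉} + 𝔪^{[2ᵉ]})` is `(7/9)4ᵉ + (5/9)2ᵉ − 2/9` for odd `e` and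
`(7/9)4ᵉ + (7/9)2ᵉ − 5/9` for even `e`. -/
theorem stmt17 (e : ℕ) (he : 0 < e) :
    (Odd e →
      (Module.finrank (ZMod 2)
        (MvPolynomial (Fin 2) (ZMod 2) ⧸
          (Ideal.span (Set.range (MvPolynomial.X : Fin 2 → MvPolynomial (Fin 2) (ZMod 2)))
              ^ ⌈(4 : ℚ) / 3 * 2 ^ e⌉₊
            ⊔ Ideal.span (Set.range fun i : Fin 2 =>
                (MvPolynomial.X i : MvPolynomial (Fin 2) (ZMod 2)) ^ 2 ^ e))) : ℚ)
        = 7 / 9 * 4 ^ e + 5 / 9 * 2 ^ e - 2 / 9) ∧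
    (Even e →
      (Module.finrank (ZMod 2)
        (MvPolynomial (Fin 2) (ZMod 2) ⧸
          (Ideal.span (Set.range (MvPolynomial.X : Fin 2 → MvPolynomial (Fin 2) (ZMod 2)))
              ^ ⌈(4 : ℚ) / 3 * 2 ^ e⌉₊
            ⊔ Ideal.span (Set.range fun i : Fin 2 =>
                (MvPolynomial.X i : MvPolynomial (Fin 2) (ZMod 2)) ^ 2 ^ e))) : ℚ)
        = 7 / 9 * 4 ^ e + 7 / 9 * 2 ^ e - 5 / 9) := by
  constructor
  · intro hodd
    obtain ⟨k, hk⟩ := odd_pow_val e hodd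
    have hceil : ⌈(4 : ℚ) / 3 * 2 ^ e⌉₊ = 8 * k + 3 :=
      ceil_val e (8 * k + 3) (by omega) (Or.inl (by omega))
    rw [hceil, finrank_quot (2 ^ e) (8 * k + 3)]
    rcases Nat.eq_zero_or_pos k with rfl | hkpos
    · -- e = 1
      have he1 : e = 1 := by
        have h2 : 2 ^ e = 2 ^ 1 := by omega
        exact Nat.pow_right_injective (le_refl 2) h2
      subst he1
      norm_num [cbox]
      decide
    · have hcount := cbox_card (2 ^ e) (8 * k + 3) (by omega) (by omega)
      have hc : 2 * 2 ^ e - (8 * k + 3) = 4 * k + 1 := by omega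
      rw [hc, show 4 * k + 1 - 1 = 4 * k from rfl] at hcount
      have hdiv : (4 * k + 1) * (4 * k) / 2 = 8 * k ^ 2 + 2 * k := by
        have h : (4 * k + 1) * (4 * k) = (8 * k ^ 2 + 2 * k) * 2 := by ring
        rw [h, Nat.mul_div_cancel _ (by norm_num)]
      rw [hdiv] at hcount
      have h2e : ((2 : ℚ)) ^ e = 6 * (k : ℚ) + 2 := by exact_mod_cast hk
      have h4e : ((4 : ℚ)) ^ e = (6 * (k : ℚ) + 2) ^ 2 := by
        have h : ((4 : ℚ)) ^ e = ((2 : ℚ) ^ e) ^ 2 := by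
          rw [← pow_mul, mul_comm, pow_mul]; norm_num
        rw [h, h2e]
      have hQ : ((cbox (2 ^ e) (8 * k + 3)).card : ℚ) + (8 * (k : ℚ) ^ 2 + 2 * k)
          = (2 : ℚ) ^ e * 2 ^ e := by exact_mod_cast hcount
      rw [h2e] at hQ
      rw [h4e, h2e]
      linear_combination hQ
  · intro heven
    obtain ⟨k, hkpos, hk⟩ := even_pow_val e heven he
    have hceil : ⌈(4 : ℚ) / 3 * 2 ^ e⌉₊ = 4 * k + 2 :=
      ceil_val e (4 * k + 2) (by omega) (Or.inr (by omega))
    rw [hceil, finrank_quot (2 ^ e) (4 * k + 2)]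
    have hcount := cbox_card (2 ^ e) (4 * k + 2) (by omega) (by omega)
    have hc : 2 * 2 ^ e - (4 * k + 2) = 2 * k := by omega
    rw [hc] at hcount
    have hdiv : 2 * k * (2 * k - 1) / 2 = 2 * k ^ 2 - k := by
      obtain ⟨n, rfl⟩ : ∃ n, k = n + 1 := ⟨k - 1, by omega⟩
      have h1 : 2 * (n + 1) - 1 = 2 * n + 1 := by omega
      have h2 : (n + 1) ^ 2 = n ^ 2 + 2 * n + 1 := by ring
      have h3 : 2 * (n + 1) ^ 2 - (n + 1) = 2 * n ^ 2 + 3 * n + 1 := by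
        rw [h2]; omega
      rw [h1, h3]
      have h4 : 2 * (n + 1) * (2 * n + 1) = (2 * n ^ 2 + 3 * n + 1) * 2 := by ring
      rw [h4, Nat.mul_div_cancel _ (by norm_num)]
    rw [hdiv] at hcount
    have h2e : ((2 : ℚ)) ^ e = 3 * (k : ℚ) + 1 := by exact_mod_cast hk
    have h4e : ((4 : ℚ)) ^ e = (3 * (k : ℚ) + 1) ^ 2 := by
      have h : ((4 : ℚ)) ^ e = ((2 : ℚ) ^ e) ^ 2 := by
        rw [← pow_mul, mul_comm, pow_mul]; norm_num
      rw [h, h2e]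
    have hsub : ((2 * k ^ 2 - k : ℕ) : ℚ) = 2 * (k : ℚ) ^ 2 - k := by
      have hle : k ≤ 2 * k ^ 2 := by nlinarith
      push_cast [hle]
      ring
    have hQ : ((cbox (2 ^ e) (4 * k + 2)).card : ℚ) + ((2 * k ^ 2 - k : ℕ) : ℚ)
        = (2 : ℚ) ^ e * 2 ^ e := by exact_mod_cast hcount
    rw [hsub, h2e] at hQ
    rw [h4e, h2e]
    linear_combination hQ
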